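/- For every natural number d there exist integers q̃₁, …, q̃_{d+1} such that for all real λ ≠ 0: (e^λ − e^{−λ})^{−1} · iteratedDeriv (2d+1) (fun x => 2/(Real.exp x − Real.exp (−x))) λ = Σ_{j=1}^{d+1} q̃_j · (e^λ + e^{−λ}) / (e^λ − e^{−λ})^{2j+1}. -/

import Mathlib

open Finset

private lemma sne {l : ℝ} (hl : l ≠ 0) : Real.exp l - Real.exp (-l) ≠ 0 := by
  rw [sub_ne_zero]
  intro h
  have := Real.exp_eq_exp.mp h
  exact hl (by linarith)

private lemma hasDerivAt_S (l : ℝ) :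
    HasDerivAt (fun x : ℝ => Real.exp x - Real.exp (-x))
      (Real.exp l + Real.exp (-l)) l := by
  have h2 : HasDerivAt (fun x : ℝ => Real.exp (-x)) (-Real.exp (-l)) l := by
    simpa [Function.comp_def] using (Real.hasDerivAt_exp (-l)).comp l (hasDerivAt_neg l)
  simpa using (Real.hasDerivAt_exp l).fun_sub h2

private lemma hasDerivAt_C (l : ℝ) :
    HasDerivAt (fun x : ℝ => Real.exp x + Real.exp (-x))
      (Real.exp l - Real.exp (-l)) l := by
  have h2 : HasDerivAt (fun x : ℝ => Real.exp (-x)) (-Real.exp (-l)) l := by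
    simpa [Function.comp_def] using (Real.hasDerivAt_exp (-l)).comp l (hasDerivAt_neg l)
  simpa [sub_eq_add_neg] using (Real.hasDerivAt_exp l).fun_add h2

private lemma hasDerivAt_U {l : ℝ} (hl : l ≠ 0) :
    HasDerivAt (fun x : ℝ => (Real.exp x - Real.exp (-x))⁻¹)
      (-(Real.exp l + Real.exp (-l)) * ((Real.exp l - Real.exp (-l))⁻¹) ^ 2) l := by
  have := (hasDerivAt_S l).fun_inv (sne hl)
  refine this.congr_deriv ?_
  field_simp

private lemma hasDerivAt_Upow {l : ℝ} (hl : l ≠ 0) (m : ℕ) :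
    HasDerivAt (fun x : ℝ => ((Real.exp x - Real.exp (-x))⁻¹) ^ (m + 1))
      (-((m : ℝ) + 1) * (Real.exp l + Real.exp (-l)) *
        ((Real.exp l - Real.exp (-l))⁻¹) ^ (m + 2)) l := by
  have := (hasDerivAt_U hl).fun_pow (m + 1)
  refine this.congr_deriv ?_
  simp only [Nat.add_sub_cancel]
  push_cast
  ring

private lemma c_sq (l : ℝ) :
    (Real.exp l + Real.exp (-l)) ^ 2 = (Real.exp l - Real.exp (-l)) ^ 2 + 4 := by
  have hef : Real.exp l * Real.exp (-l) = 1 := by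
    rw [← Real.exp_add]; simp
  linear_combination 4 * hef

private lemma hasDerivAt_CU {l : ℝ} (hl : l ≠ 0) (m : ℕ) :
    HasDerivAt (fun x : ℝ => (Real.exp x + Real.exp (-x)) *
        ((Real.exp x - Real.exp (-x))⁻¹) ^ (m + 2))
      (-((m : ℝ) + 1) * ((Real.exp l - Real.exp (-l))⁻¹) ^ (m + 1)
        - 4 * ((m : ℝ) + 2) * ((Real.exp l - Real.exp (-l))⁻¹) ^ (m + 3)) l := by
  have := (hasDerivAt_C l).fun_mul (hasDerivAt_Upow hl (m + 1))
  refine this.congr_deriv ?_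
  symm
  have hsu : (Real.exp l - Real.exp (-l)) * (Real.exp l - Real.exp (-l))⁻¹ = 1 :=
    mul_inv_cancel₀ (sne hl)
  have hc2 := c_sq l
  set s := Real.exp l - Real.exp (-l)
  set c := Real.exp l + Real.exp (-l)
  set u := s⁻¹
  push_cast
  linear_combination ((((m:ℝ) + 2) * s * u + ((m:ℝ) + 1)) * u ^ (m + 1)) * hsu +
    (((m:ℝ) + 2) * u ^ (m + 3)) * hc2

private lemma sumshuffle (b : ℕ → ℤ) (u : ℝ) : ∀ k : ℕ,
    ∑ j ∈ range (k + 1), (b j : ℝ) *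
        (-(2 * (j : ℝ) + 1) * u ^ (2 * j + 1) - (8 * (j : ℝ) + 8) * u ^ (2 * j + 3)) =
      (∑ j ∈ range (k + 2),
        ((-(2 * (j : ℤ) + 1) * b j - 8 * j * b (j - 1) : ℤ) : ℝ) * u ^ (2 * j + 1))
      + (2 * ((k : ℝ) + 1) + 1) * (b (k + 1) : ℝ) * u ^ (2 * (k + 1) + 1) := by
  intro k
  induction k with
  | zero =>
    simp only [Finset.sum_range_succ, Finset.sum_range_zero]
    push_cast
    ring
  | succ k ih =>
    rw [Finset.sum_range_succ, ih, show k + 1 + 2 = (k + 2) + 1 from rfl,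
      Finset.sum_range_succ _ (k + 2)]
    simp only [show k + 2 - 1 = k + 1 from rfl]
    push_cast
    ring

private lemma stepB {n k : ℕ} (a : ℕ → ℤ)
    (h : ∀ l : ℝ, l ≠ 0 →
      iteratedDeriv n (fun x : ℝ => 2 / (Real.exp x - Real.exp (-x))) l =
        ∑ j ∈ range (k + 1), (a j : ℝ) * ((Real.exp l - Real.exp (-l))⁻¹) ^ (2 * j + 1)) :
    ∀ l : ℝ, l ≠ 0 →
      iteratedDeriv (n + 1) (fun x : ℝ => 2 / (Real.exp x - Real.exp (-x))) l =
        ∑ j ∈ range (k + 1), ((-(2 * (j : ℤ) + 1) * a j : ℤ) : ℝ) *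
          (Real.exp l + Real.exp (-l)) * ((Real.exp l - Real.exp (-l))⁻¹) ^ (2 * j + 2) := by
  intro l hl
  rw [iteratedDeriv_succ]
  have hmem : {x : ℝ | x ≠ 0} ∈ nhds l := isOpen_ne.mem_nhds hl
  have hev : iteratedDeriv n (fun x : ℝ => 2 / (Real.exp x - Real.exp (-x))) =ᶠ[nhds l]
      (fun x => ∑ j ∈ range (k + 1),
        (a j : ℝ) * ((Real.exp x - Real.exp (-x))⁻¹) ^ (2 * j + 1)) :=
    Filter.eventuallyEq_of_mem hmem (fun x hx => h x hx)
  rw [hev.deriv_eq]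
  have hd : HasDerivAt (fun x : ℝ => ∑ j ∈ range (k + 1),
      (a j : ℝ) * ((Real.exp x - Real.exp (-x))⁻¹) ^ (2 * j + 1))
      (∑ j ∈ range (k + 1), (a j : ℝ) *
        (-((2 * (j : ℝ)) + 1) * (Real.exp l + Real.exp (-l)) *
          ((Real.exp l - Real.exp (-l))⁻¹) ^ (2 * j + 2))) l := by
    refine HasDerivAt.fun_sum (fun j _ => ?_)
    have := (hasDerivAt_Upow hl (2 * j)).const_mul (a j : ℝ)
    refine this.congr_deriv ?_
    push_cast
    ring
  rw [hd.deriv]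
  refine Finset.sum_congr rfl (fun j _ => ?_)
  push_cast
  ring

private lemma stepA {n k : ℕ} (b : ℕ → ℤ) (hb0 : ∀ j, k + 1 ≤ j → b j = 0)
    (h : ∀ l : ℝ, l ≠ 0 →
      iteratedDeriv n (fun x : ℝ => 2 / (Real.exp x - Real.exp (-x))) l =
        ∑ j ∈ range (k + 1), (b j : ℝ) * (Real.exp l + Real.exp (-l)) *
          ((Real.exp l - Real.exp (-l))⁻¹) ^ (2 * j + 2)) :
    ∀ l : ℝ, l ≠ 0 →
      iteratedDeriv (n + 1) (fun x : ℝ => 2 / (Real.exp x - Real.exp (-x))) l =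
        ∑ j ∈ range (k + 2),
          ((-(2 * (j : ℤ) + 1) * b j - 8 * j * b (j - 1) : ℤ) : ℝ) *
            ((Real.exp l - Real.exp (-l))⁻¹) ^ (2 * j + 1) := by
  intro l hl
  rw [iteratedDeriv_succ]
  have hmem : {x : ℝ | x ≠ 0} ∈ nhds l := isOpen_ne.mem_nhds hl
  have hev : iteratedDeriv n (fun x : ℝ => 2 / (Real.exp x - Real.exp (-x))) =ᶠ[nhds l]
      (fun x => ∑ j ∈ range (k + 1), (b j : ℝ) * (Real.exp x + Real.exp (-x)) *
        ((Real.exp x - Real.exp (-x))⁻¹) ^ (2 * j + 2)) :=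
    Filter.eventuallyEq_of_mem hmem (fun x hx => h x hx)
  rw [hev.deriv_eq]
  have hd : HasDerivAt (fun x : ℝ => ∑ j ∈ range (k + 1),
      (b j : ℝ) * (Real.exp x + Real.exp (-x)) *
        ((Real.exp x - Real.exp (-x))⁻¹) ^ (2 * j + 2))
      (∑ j ∈ range (k + 1), (b j : ℝ) *
        (-(2 * (j : ℝ) + 1) * ((Real.exp l - Real.exp (-l))⁻¹) ^ (2 * j + 1)
          - (8 * (j : ℝ) + 8) * ((Real.exp l - Real.exp (-l))⁻¹) ^ (2 * j + 3))) l := by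
    refine HasDerivAt.fun_sum (fun j _ => ?_)
    have := (hasDerivAt_CU hl (2 * j)).const_mul (b j : ℝ)
    have h2 : (fun x : ℝ => (b j : ℝ) * ((Real.exp x + Real.exp (-x)) *
        ((Real.exp x - Real.exp (-x))⁻¹) ^ (2 * j + 2))) =
        (fun x : ℝ => (b j : ℝ) * (Real.exp x + Real.exp (-x)) *
        ((Real.exp x - Real.exp (-x))⁻¹) ^ (2 * j + 2)) := by
      funext x; ring
    rw [h2] at this
    refine this.congr_deriv ?_
    push_cast
    ring
  rw [hd.deriv, sumshuffle b _ k, hb0 (k + 1) le_rfl]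
  simp

private lemma mainA : ∀ k : ℕ, ∃ a : ℕ → ℤ, (∀ j, k + 1 ≤ j → a j = 0) ∧
    ∀ l : ℝ, l ≠ 0 →
      iteratedDeriv (2 * k) (fun x : ℝ => 2 / (Real.exp x - Real.exp (-x))) l =
        ∑ j ∈ range (k + 1), (a j : ℝ) * ((Real.exp l - Real.exp (-l))⁻¹) ^ (2 * j + 1) := by
  intro k
  induction k with
  | zero =>
    refine ⟨fun j => if j = 0 then 2 else 0, fun j hj => if_neg (by omega), ?_⟩
    intro l hl
    simp [iteratedDeriv_zero, Finset.sum_range_one, div_eq_mul_inv]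
  | succ k ih =>
    obtain ⟨a, ha0, ha⟩ := ih
    have hb := stepB a ha
    set b : ℕ → ℤ := fun j => -(2 * (j : ℤ) + 1) * a j with hbdef
    have hb0 : ∀ j, k + 1 ≤ j → b j = 0 := by
      intro j hj; simp [hbdef, ha0 j hj]
    have hb' : ∀ l : ℝ, l ≠ 0 →
        iteratedDeriv (2 * k + 1) (fun x : ℝ => 2 / (Real.exp x - Real.exp (-x))) l =
          ∑ j ∈ range (k + 1), (b j : ℝ) * (Real.exp l + Real.exp (-l)) *
            ((Real.exp l - Real.exp (-l))⁻¹) ^ (2 * j + 2) := hb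
    have ha' := stepA b hb0 hb'
    refine ⟨fun j => -(2 * (j : ℤ) + 1) * b j - 8 * j * b (j - 1), ?_, ?_⟩
    · intro j hj
      have h1 : b j = 0 := hb0 j (by omega)
      have h2 : b (j - 1) = 0 := hb0 (j - 1) (by omega)
      simp [h1, h2]
    · intro l hl
      have : 2 * (k + 1) = 2 * k + 1 + 1 := by ring
      rw [this]
      exact ha' l hl

/-- For every `d : ℕ` there exist integers `q̃₁, …, q̃_{d+1}` such that for all
real `λ ≠ 0`:
`(e^λ - e^{-λ})⁻¹ · (d/dλ)^{2d+1} (2/(e^λ - e^{-λ}))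
  = Σ_{j=1}^{d+1} q̃_j (e^λ + e^{-λ})/(e^λ - e^{-λ})^{2j+1}`. -/
theorem antisymmetric_time_combination_integral_coeffs
    (d : ℕ) :
    ∃ q : ℕ → ℤ, ∀ l : ℝ, l ≠ 0 →
      (Real.exp l - Real.exp (-l))⁻¹ *
          iteratedDeriv (2 * d + 1)
            (fun x : ℝ => 2 / (Real.exp x - Real.exp (-x))) l =
        ∑ j ∈ Finset.Icc 1 (d + 1),
          (q j : ℝ) * (Real.exp l + Real.exp (-l)) /
            (Real.exp l - Real.exp (-l)) ^ (2 * j + 1) := by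
  obtain ⟨a, _, ha⟩ := mainA d
  have hb := stepB a ha
  refine ⟨fun j => -(2 * ((j - 1 : ℕ) : ℤ) + 1) * a (j - 1), ?_⟩
  intro l hl
  rw [hb l hl, Finset.mul_sum, ← Finset.Ico_add_one_right_eq_Icc, Finset.sum_Ico_eq_sum_range]
  simp only [show d + 1 + 1 - 1 = d + 1 from rfl]
  refine Finset.sum_congr rfl (fun i _ => ?_)
  simp only [show 1 + i - 1 = i from by omega]
  rw [div_eq_mul_inv, ← inv_pow]
  push_cast
  ring
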